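/- arXiv:1912.04741 — 2 statements merged into one kernel-verified Lean document; each statement's English description precedes it below -/
import Mathlib

section
/- A continuous global section s : X^n → PX of the evaluation fibration e_n exists if and only if X is contractible, for X path-connected and n ≥ 2. -/
/-- The evaluation map `e_n : PX → Xⁿ`. -/
noncomputable def evalMap (X : Type*) [TopologicalSpace X] (n : ℕ) :
    C(unitInterval, X) → (Fin n → X) :=
  fun γ i => γ (Set.projIcc (0 : ℝ) 1 zero_le_one ((i : ℝ) / ((n : ℝ) - 1)))

open Set unitInterval in
theorem forward_dir (X : Type*) [TopologicalSpace X] (n : ℕ) (hn : 2 ≤ n)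
    [PathConnectedSpace X]
    (s : (Fin n → X) → C(unitInterval, X)) (hs : Continuous s)
    (hsec : ∀ p, evalMap X n (s p) = p) : ContractibleSpace X := by
  obtain ⟨x0⟩ : Nonempty X := inferInstance
  rw [contractible_iff_id_nullhomotopic]
  have hc : Continuous fun (q : I × X) =>
      (s (fun i => if i.val = 0 then q.2 else x0))
        (Set.projIcc (0:ℝ) 1 zero_le_one ((q.1 : ℝ) / ((n : ℝ) - 1))) := by
    refine continuous_eval.comp (Continuous.prodMk ?_ ?_)
    · exact hs.comp (continuous_pi fun i => by
        by_cases h : i.val = 0 <;> simp [h]; · exact continuous_snd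
        · exact continuous_const)
    · exact (continuous_projIcc : Continuous (Set.projIcc (0:ℝ) 1 zero_le_one)).comp ((continuous_subtype_val.comp continuous_fst).div_const _)
  refine ⟨x0, ⟨⟨⟨_, hc⟩, ?_, ?_⟩⟩⟩
  · intro x
    have := congrFun (hsec (fun i => if i.val = 0 then x else x0)) ⟨0, by omega⟩
    simpa [evalMap] using this
  · intro x
    have := congrFun (hsec (fun i => if i.val = 0 then x else x0)) ⟨1, by omega⟩
    simpa [evalMap] using this

open Set unitInterval in
theorem backward_dir (X : Type*) [TopologicalSpace X] (n : ℕ) (hn : 2 ≤ n)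
    (h : ContractibleSpace X) :
    ∃ s : (Fin n → X) → C(unitInterval, X),
      Continuous s ∧ ∀ p, evalMap X n (s p) = p := by
  obtain ⟨x0, ⟨H⟩⟩ := (contractible_iff_id_nullhomotopic X).mp h
  have hm1 : (1:ℝ) ≤ (n:ℝ) - 1 := by
    have : (2:ℝ) ≤ (n:ℝ) := by exact_mod_cast hn
    linarith
  obtain ⟨m, hmdef⟩ : ∃ m : ℝ, m = (n:ℝ) - 1 := ⟨_, rfl⟩
  rw [← hmdef] at hm1
  have hm0 : 0 < m := by linarith
  have hkn : ∀ t : I, 0 ≤ ⌊m * (t:ℝ) + 1/2⌋ ∧ ⌊m * (t:ℝ) + 1/2⌋ ≤ (n:ℤ) - 1 := by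
    intro t
    have ht0 : 0 ≤ (t:ℝ) := t.2.1
    have ht1 : (t:ℝ) ≤ 1 := t.2.2
    constructor
    · exact Int.floor_nonneg.mpr (by nlinarith)
    · have : ⌊m * (t:ℝ) + 1/2⌋ < (n:ℤ) := Int.floor_lt.mpr (by push_cast; nlinarith [hmdef])
      omega
  let idx : I → Fin n := fun t => ⟨(⌊m * (t:ℝ) + 1/2⌋).toNat ⊓ (n-1), by omega⟩
  have hidx : ∀ t : I, ((idx t).val : ℤ) = ⌊m * (t:ℝ) + 1/2⌋ := by
    intro t
    obtain ⟨h1, h2⟩ := hkn t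
    simp only [idx]
    omega
  let par : ℕ → ((Fin n → X) × I) → I := fun i q =>
    Set.projIcc (0:ℝ) 1 zero_le_one (|2*m*(q.2:ℝ) - 2*(i:ℝ)|)
  have hpar_cont : ∀ i : ℕ, Continuous (par i) := by
    intro i
    exact (continuous_projIcc : Continuous (Set.projIcc (0:ℝ) 1 zero_le_one)).comp
      (by fun_prop)
  let f : ((Fin n → X) × I) → X := fun q => H (par (idx q.2).val q, q.1 (idx q.2))
  let C : Fin n → Set ((Fin n → X) × I) := fun i => {q | |m * (q.2:ℝ) - (i.val:ℝ)| ≤ 1/2}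
  have hg : ∀ i : Fin n, Continuous (fun q : (Fin n → X) × I => H (par i.val q, q.1 i)) := by
    intro i
    exact H.continuous.comp ((hpar_cont i.val).prodMk ((continuous_apply i).comp continuous_fst))
  have hagree : ∀ i : Fin n, ∀ q ∈ C i, f q = H (par i.val q, q.1 i) := by
    intro i q hq
    have hC : |m * ((q.2:I):ℝ) - (i.val:ℝ)| ≤ 1/2 := hq
    obtain ⟨hlo, hhi⟩ := abs_le.mp hC
    have hfq : f q = H (par (idx q.2).val q, q.1 (idx q.2)) := rfl
    rcases lt_or_eq_of_le hhi with hlt | heq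
    · have hk : ⌊m * ((q.2:I):ℝ) + 1/2⌋ = (i.val : ℤ) := by
        refine Int.floor_eq_iff.mpr ⟨by push_cast; linarith, by push_cast; linarith⟩
      have hj : idx q.2 = i := by
        have := hidx q.2
        rw [hk] at this
        exact Fin.ext (by exact_mod_cast this)
      rw [hfq, hj]
    · have hmt : m * ((q.2:I):ℝ) = (i.val:ℝ) + 1/2 := by linarith
      have hk : ⌊m * ((q.2:I):ℝ) + 1/2⌋ = (i.val : ℤ) + 1 := by
        rw [hmt]
        rw [show ((i.val:ℝ) + 1/2 + 1/2 : ℝ) = (((i.val:ℤ) + 1 : ℤ) : ℝ) by push_cast; ring]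
        exact Int.floor_intCast _
      have hj : ((idx q.2).val : ℤ) = (i.val:ℤ) + 1 := by rw [hidx q.2, hk]
      have hv : ((idx q.2).val : ℝ) = (i.val : ℝ) + 1 := by exact_mod_cast hj
      have hpar1 : par (idx q.2).val q = 1 := by
        simp only [par]
        rw [show |2*m*((q.2:I):ℝ) - 2*(((idx q.2).val:ℕ):ℝ)| = 1 by
          rw [abs_eq (by norm_num : (0:ℝ) ≤ 1)]; right; rw [hv]; linarith]
        exact Subtype.ext (by rw [Set.coe_projIcc]; norm_num)
      have hpar2 : par i.val q = 1 := by
        simp only [par]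
        rw [show |2*m*((q.2:I):ℝ) - 2*((i.val:ℕ):ℝ)| = 1 by
          rw [abs_eq (by norm_num : (0:ℝ) ≤ 1)]; left; linarith]
        exact Subtype.ext (by rw [Set.coe_projIcc]; norm_num)
      rw [hfq, hpar1, hpar2]
      rw [H.apply_one, H.apply_one]
      rfl
  have hcov : ⋃ i, C i = Set.univ := by
    ext q
    simp only [Set.mem_iUnion, Set.mem_univ, iff_true]
    refine ⟨idx q.2, ?_⟩
    have h1 := Int.floor_le (m * ((q.2:I):ℝ) + 1/2)
    have h2 := Int.lt_floor_add_one (m * ((q.2:I):ℝ) + 1/2)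
    have hv : ((idx q.2).val : ℝ) = (⌊m * ((q.2:I):ℝ) + 1/2⌋ : ℝ) := by
      exact_mod_cast hidx q.2
    show |m * ((q.2:I):ℝ) - ((idx q.2).val : ℝ)| ≤ 1/2
    rw [hv, abs_le]
    constructor <;> linarith
  have hclosed : ∀ i : Fin n, IsClosed (C i) := by
    intro i
    have : C i = (fun q : (Fin n → X) × I => |m * (q.2:ℝ) - (i.val:ℝ)|) ⁻¹' Set.Iic (1/2) := rfl
    rw [this]
    exact IsClosed.preimage (by fun_prop) isClosed_Iic
  have hf : Continuous f :=
    (locallyFinite_of_finite C).continuous hcov hclosed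
      (fun i => ((hg i).continuousOn).congr (hagree i))
  let F : C((Fin n → X) × I, X) := ⟨f, hf⟩
  refine ⟨fun p => F.curry p, F.curry.continuous, ?_⟩
  intro p
  funext i
  show f (p, Set.projIcc (0:ℝ) 1 zero_le_one ((i : ℝ) / ((n:ℝ)-1))) = p i
  rw [← hmdef]
  have hmem : (i.val:ℝ)/m ∈ Set.Icc (0:ℝ) 1 := by
    constructor
    · positivity
    · rw [div_le_one hm0]
      have h2 : (i.val:ℝ) + 1 ≤ (n:ℝ) := by exact_mod_cast i.isLt
      linarith
  set t : I := Set.projIcc (0:ℝ) 1 zero_le_one ((i : ℝ) / m) with ht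
  have htv : (t : ℝ) = (i.val : ℝ) / m := by
    rw [ht, Set.projIcc_of_mem _ hmem]
  have hmt : m * (t : ℝ) = (i.val : ℝ) := by
    rw [htv]; field_simp
  have hk : ⌊m * (t:ℝ) + 1/2⌋ = (i.val : ℤ) := by
    refine Int.floor_eq_iff.mpr ⟨by push_cast; linarith, by push_cast; linarith⟩
  have hj : idx t = i := by
    have := hidx t
    rw [hk] at this
    exact Fin.ext (by exact_mod_cast this)
  have hpar0 : par i.val (p, t) = 0 := by
    simp only [par]
    rw [show |2*m*((t:I):ℝ) - 2*((i.val:ℕ):ℝ)| = 0 by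
      rw [abs_eq_zero]; linarith]
    exact Subtype.ext (by rw [Set.coe_projIcc]; norm_num)
  have hfq : f (p, t) = H (par (idx t).val (p, t), p (idx t)) := rfl
  rw [hfq, hj, hpar0, H.apply_zero]
  rfl

/-- A continuous global section of the evaluation fibration `e_n` exists
iff `X` is contractible. -/
theorem stmt1 (X : Type*) [TopologicalSpace X] (n : ℕ) (hn : 2 ≤ n)
    [PathConnectedSpace X] :
    (∃ s : (Fin n → X) → C(unitInterval, X),
        Continuous s ∧ ∀ p, evalMap X n (s p) = p) ↔ ContractibleSpace X := by
  constructor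
  · rintro ⟨s, hs, hsec⟩
    exact forward_dir X n hn s hs hsec
  · intro h
    exact backward_dir X n hn h
end

section
/- Suppose A ⊆ X^n admits a continuous section s_A : A → PX of the evaluation fibration e_n, and B ⊆ X^n can be continuously deformed into A within X^n (i.e., there is a homotopy H : B × [0,1] → X^n with H(b,0) = b and H(b,1) ∈ A). Then B admits a continuous section s_B : B → PX of e_n. -/
open Set Filter Topology


/-- Gluing lemma: a function continuous on finitely many relatively closed pieces
covering `s` is continuous on `s`. -/
theorem continuousOn_of_finite_closed_cover {α β : Type*} [TopologicalSpace α]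
    [TopologicalSpace β] {f : α → β} {s : Set α} {ι : Type*} {t : Finset ι} {C : ι → Set α}
    (hC : ∀ i ∈ t, IsClosed (C i)) (hcov : s ⊆ ⋃ i ∈ t, C i)
    (hf : ∀ i ∈ t, ContinuousOn f (s ∩ C i)) : ContinuousOn f s := by
  intro p hp
  have hsub : s ⊆ ⋃ i ∈ (t : Set ι), (s ∩ C i) := by
    intro x hx
    obtain ⟨i, hi, h⟩ : ∃ i ∈ t, x ∈ C i := by simpa using hcov hx
    exact mem_biUnion hi ⟨hx, h⟩
  have h1 : 𝓝[s] p ≤ 𝓝[⋃ i ∈ (t : Set ι), (s ∩ C i)] p := nhdsWithin_mono _ hsub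
  rw [nhdsWithin_biUnion t.finite_toSet] at h1
  refine Filter.Tendsto.mono_left ?_ h1
  rw [Filter.tendsto_iSup]
  intro i
  rw [Filter.tendsto_iSup]
  intro hi
  by_cases hpi : p ∈ C i
  · exact hf i hi p ⟨hp, hpi⟩
  · have : 𝓝[s ∩ C i] p = ⊥ := by
      apply notMem_closure_iff_nhdsWithin_eq_bot.1
      intro h
      exact hpi (closure_minimal Set.inter_subset_right (hC i hi) h)
    rw [this]
    exact tendsto_bot

noncomputable section EvalSection

variable {X : Type*} [TopologicalSpace X]

/-- clamp to `[0,1]` -/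
noncomputable def prI (x : ℝ) : unitInterval := Set.projIcc (0 : ℝ) 1 zero_le_one x

/-- rescaled time -/
noncomputable def uR (n : ℕ) (t : unitInterval) : ℝ := (t : ℝ) * ((n : ℝ) - 1)

/-- cell index -/
noncomputable def cIdx (n : ℕ) (t : unitInterval) : ℕ := min ⌊uR n t⌋₊ (n - 2)

/-- within-cell parameter -/
noncomputable def cR (n : ℕ) (t : unitInterval) : ℝ := uR n t - cIdx n t

lemma cIdx_le (n : ℕ) (t : unitInterval) : cIdx n t ≤ n - 2 := min_le_right _ _

lemma cIdx_lt {n : ℕ} (hn : 2 ≤ n) (t : unitInterval) : cIdx n t < n :=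
  lt_of_le_of_lt (cIdx_le n t) (by omega)

lemma cIdx_succ_lt {n : ℕ} (hn : 2 ≤ n) (t : unitInterval) : cIdx n t + 1 < n := by
  have := cIdx_le n t; omega

/-- The glued section map. -/
noncomputable def Fm (n : ℕ) (hn : 2 ≤ n) (sA : (Fin n → X) → C(unitInterval, X))
    (H : (Fin n → X) × unitInterval → (Fin n → X))
    (p : (Fin n → X) × unitInterval) : X :=
  if cR n p.2 ≤ 1/3 then
    H (p.1, prI (3 * cR n p.2)) ⟨cIdx n p.2, cIdx_lt hn p.2⟩
  else if cR n p.2 ≤ 2/3 then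
    sA (H (p.1, 1)) (prI (((cIdx n p.2 : ℝ) + 3 * cR n p.2 - 1) / ((n : ℝ) - 1)))
  else
    H (p.1, prI (3 * (1 - cR n p.2))) ⟨cIdx n p.2 + 1, cIdx_succ_lt hn p.2⟩

end EvalSection

section Lemmas

variable {X : Type*} [TopologicalSpace X]

lemma prI_coe {x : ℝ} (h0 : 0 ≤ x) (h1 : x ≤ 1) : ((prI x : ℝ)) = x := by
  simp [prI, Set.coe_projIcc, max_eq_right, min_eq_right, h0, h1]

lemma prI_zero : prI (0 : ℝ) = 0 := by
  ext; simp [prI, Set.coe_projIcc]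

lemma prI_one : prI (1 : ℝ) = 1 := by
  ext; simp [prI, Set.coe_projIcc]

lemma continuous_prI : Continuous prI := continuous_projIcc (h := zero_le_one)

lemma continuous_uR (n : ℕ) : Continuous (uR n) :=
  (continuous_subtype_val).mul continuous_const

lemma uR_nonneg {n : ℕ} (hn : 2 ≤ n) (t : unitInterval) : 0 ≤ uR n t := by
  have h1 : (0:ℝ) ≤ (t:ℝ) := t.2.1
  have h2 : (1:ℝ) ≤ (n:ℝ) - 1 := by
    have : (2:ℝ) ≤ (n:ℝ) := by exact_mod_cast hn
    linarith
  exact mul_nonneg h1 (by linarith)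

lemma uR_le {n : ℕ} (hn : 2 ≤ n) (t : unitInterval) : uR n t ≤ (n:ℝ) - 1 := by
  have h1 : (t:ℝ) ≤ 1 := t.2.2
  have h2 : (1:ℝ) ≤ (n:ℝ) - 1 := by
    have : (2:ℝ) ≤ (n:ℝ) := by exact_mod_cast hn
    linarith
  calc uR n t ≤ 1 * ((n:ℝ)-1) := mul_le_mul_of_nonneg_right h1 (by linarith)
    _ = (n:ℝ) - 1 := one_mul _

lemma cIdx_eq {n j : ℕ} (hj : j ≤ n - 2) {t : unitInterval}
    (h1 : (j:ℝ) ≤ uR n t) (h2 : uR n t < (j:ℝ) + 1) : cIdx n t = j := by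
  have h0 : (0:ℝ) ≤ uR n t := le_trans (Nat.cast_nonneg j) h1
  have hfl : ⌊uR n t⌋₊ = j := (Nat.floor_eq_iff h0).2 ⟨h1, h2⟩
  simp [cIdx, hfl, hj]

end Lemmas

section Node

variable {X : Type*} [TopologicalSpace X]

lemma Fm_node {n : ℕ} (hn : 2 ≤ n) (sA : (Fin n → X) → C(unitInterval, X))
    (H : (Fin n → X) × unitInterval → (Fin n → X)) (b : Fin n → X)
    (hb0 : H (b, 0) = b) (i : Fin n) :
    Fm n hn sA H (b, prI ((i : ℝ) / ((n : ℝ) - 1))) = b i := by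
  have hn2 : (2:ℝ) ≤ (n:ℝ) := by exact_mod_cast hn
  have hnr : (1:ℝ) ≤ (n:ℝ) - 1 := by linarith
  have hi1 : (i : ℝ) ≤ (n:ℝ) - 1 := by
    have : (i : ℕ) ≤ n - 1 := by omega
    have h' : ((i:ℕ):ℝ) ≤ ((n-1:ℕ):ℝ) := by exact_mod_cast this
    have : ((n-1:ℕ):ℝ) = (n:ℝ) - 1 := by
      push_cast [Nat.cast_sub (by omega : 1 ≤ n)]; ring
    linarith [h', this.ge]
  set t : unitInterval := prI ((i : ℝ) / ((n : ℝ) - 1)) with ht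
  have htc : (t : ℝ) = (i : ℝ) / ((n : ℝ) - 1) := by
    rw [ht]; exact prI_coe (by positivity) (by rw [div_le_one (by linarith)]; exact hi1)
  have hu : uR n t = (i : ℝ) := by
    rw [uR, htc, div_mul_cancel₀]; linarith
  rcases lt_or_eq_of_le (show (i:ℕ) ≤ n - 1 by omega) with hlt | heq
  · -- i ≤ n - 2
    have hile : (i:ℕ) ≤ n - 2 := by omega
    have hci : cIdx n t = (i:ℕ) := cIdx_eq hile (by rw [hu]) (by rw [hu]; linarith)
    have hcr : cR n t = 0 := by rw [cR, hu, hci]; ring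
    rw [Fm]
    rw [if_pos (by rw [hcr]; norm_num)]
    simp only [hcr, mul_zero, prI_zero]
    rw [show (⟨cIdx n t, cIdx_lt hn t⟩ : Fin n) = i by ext; simp [hci], hb0]
  · -- i = n - 1
    have hieq : ((i:ℕ):ℝ) = (n:ℝ) - 1 := by
      rw [show ((i:ℕ):ℝ) = ((n-1:ℕ):ℝ) by exact_mod_cast heq]
      push_cast [Nat.cast_sub (by omega : 1 ≤ n)]; ring
    have hflr : ⌊uR n t⌋₊ = n - 1 := by
      rw [hu, show ((i:ℕ):ℝ) = ((n-1:ℕ):ℝ) by exact_mod_cast heq]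
      exact Nat.floor_natCast _
    have hci : cIdx n t = n - 2 := by
      rw [cIdx, hflr]; omega
    have hcast : ((n-2:ℕ):ℝ) = (n:ℝ) - 2 := by
      push_cast [Nat.cast_sub (by omega : 2 ≤ n)]; ring
    have hcr : cR n t = 1 := by
      rw [cR, hu, hci, hcast, hieq]; ring
    rw [Fm]
    rw [if_neg (by rw [hcr]; norm_num), if_neg (by rw [hcr]; norm_num)]
    rw [hcr]
    norm_num [prI_zero]
    rw [show (⟨cIdx n t + 1, cIdx_succ_lt hn t⟩ : Fin n) = i by ext; simp [hci]; omega, hb0]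

end Node

section Main

variable {X : Type*} [TopologicalSpace X]

theorem Fm_continuousOn {n : ℕ} (hn : 2 ≤ n) {A B : Set (Fin n → X)}
    (sA : (Fin n → X) → C(unitInterval, X)) (hsA : ContinuousOn sA A)
    (hsecA : ∀ a ∈ A, evalMap X n (sA a) = a)
    (H : (Fin n → X) × unitInterval → (Fin n → X))
    (hH : ContinuousOn H (B ×ˢ (Set.univ : Set unitInterval)))
    (hH1 : ∀ b ∈ B, H (b, 1) ∈ A) :
    ContinuousOn (Fm n hn sA H) (B ×ˢ (Set.univ : Set unitInterval)) := by
  classical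
  have hn2 : (2:ℝ) ≤ (n:ℝ) := by exact_mod_cast hn
  -- the coordinate-evaluation version of hsecA
  have hsec' : ∀ b ∈ B, ∀ (k : ℕ) (hk : k < n),
      sA (H (b, 1)) (prI ((k : ℝ) / ((n:ℝ) - 1))) = H (b, 1) ⟨k, hk⟩ := by
    intro b hb k hk
    have := congrFun (hsecA _ (hH1 b hb)) ⟨k, hk⟩
    simpa [evalMap, prI] using this
  apply continuousOn_of_finite_closed_cover
    (t := (Finset.range (n-1)) ×ˢ (Finset.range 3))
    (C := fun jl : ℕ × ℕ => {p : (Fin n → X) × unitInterval |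
      (jl.1 : ℝ) + (jl.2 : ℝ)/3 ≤ uR n p.2 ∧ uR n p.2 ≤ (jl.1:ℝ) + ((jl.2:ℝ)+1)/3})
  · -- closed
    rintro ⟨j, l⟩ -
    have : {p : (Fin n → X) × unitInterval |
        (j : ℝ) + (l : ℝ)/3 ≤ uR n p.2 ∧ uR n p.2 ≤ (j:ℝ) + ((l:ℝ)+1)/3} =
        (fun p : (Fin n → X) × unitInterval => uR n p.2) ⁻¹'
          (Set.Icc ((j : ℝ) + (l : ℝ)/3) ((j:ℝ) + ((l:ℝ)+1)/3)) := rfl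
    rw [this]
    exact IsClosed.preimage ((continuous_uR n).comp continuous_snd) isClosed_Icc
  · -- cover
    rintro ⟨b, t⟩ hp
    have h0 : 0 ≤ uR n t := uR_nonneg hn t
    have h1 : uR n t ≤ (n:ℝ) - 1 := uR_le hn t
    set u := uR n t with hu
    set j : ℕ := min ⌊u⌋₊ (n-2) with hj
    have hjle : j ≤ n - 2 := min_le_right _ _
    have hj1 : (j:ℝ) ≤ u := by
      calc (j:ℝ) ≤ (⌊u⌋₊ : ℝ) := by exact_mod_cast min_le_left _ _
        _ ≤ u := Nat.floor_le h0
    have hj2 : u ≤ (j:ℝ) + 1 := by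
      rcases le_or_gt ⌊u⌋₊ (n-2) with hc | hc
      · have : j = ⌊u⌋₊ := by omega
        rw [this]
        exact le_of_lt (Nat.lt_floor_add_one u)
      · have : j = n - 2 := by omega
        rw [this]
        have hcast : ((n-2:ℕ):ℝ) = (n:ℝ) - 2 := by
          push_cast [Nat.cast_sub (by omega : 2 ≤ n)]; ring
        rw [hcast]; linarith
    set r := u - (j:ℝ) with hr
    have hr0 : 0 ≤ r := by simp [hr]; linarith
    have hr1 : r ≤ 1 := by simp [hr]; linarith
    set l : ℕ := if r ≤ 1/3 then 0 else if r ≤ 2/3 then 1 else 2 with hl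
    refine Set.mem_biUnion (x := (j, l)) ?_ ?_
    · show _ ∈ Finset.range (n-1) ×ˢ Finset.range 3
      simp only [Finset.mem_product, Finset.mem_range]
      constructor
      · omega
      · rw [hl]; split_ifs <;> omega
    · simp only [Set.mem_setOf_eq]
      rw [hl]
      split_ifs with h13 h23 <;> constructor <;> push_cast <;> linarith
  · -- continuity on each piece
    rintro ⟨j, l⟩ hjl
    simp only [Finset.mem_product, Finset.mem_range] at hjl
    obtain ⟨hjn, hl3⟩ := hjl
    have hjle : j ≤ n - 2 := by omega
    have hjltn : j < n := by omega
    have hjltn' : j + 1 < n := by omega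
    have hinner : Continuous fun p : (Fin n → X) × unitInterval => uR n p.2 :=
      (continuous_uR n).comp continuous_snd
    interval_cases l
    · -- l = 0 : first third of cell j
      apply ContinuousOn.congr
        (f := fun p : (Fin n → X) × unitInterval =>
          H (p.1, prI (3 * (uR n p.2 - (j:ℝ)))) ⟨j, hjltn⟩)
      · -- continuity of the model
        have hφ : Continuous fun p : (Fin n → X) × unitInterval =>
            (p.1, prI (3 * (uR n p.2 - (j:ℝ)))) :=
          continuous_fst.prodMk (continuous_prI.comp
            (continuous_const.mul (hinner.sub continuous_const)))
        exact (((continuous_apply (⟨j, hjltn⟩ : Fin n)).comp_continuousOn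
          (hH.comp hφ.continuousOn (fun p hp => ⟨hp.1, trivial⟩)))).mono
          Set.inter_subset_left
      · -- equality on the piece
        rintro ⟨b, t⟩ ⟨hmem, hu1, hu2⟩
        dsimp only
        push_cast at hu1 hu2
        have hj1 : (j:ℝ) ≤ uR n t := by linarith
        have hci : cIdx n t = j := cIdx_eq hjle hj1 (by linarith)
        have hcr : cR n t = uR n t - (j:ℝ) := by rw [cR, hci]
        rw [Fm, if_pos (by rw [hcr]; linarith)]
        rw [show prI (3 * cR n t) = prI (3 * (uR n t - (j:ℝ))) by rw [hcr]]
        rw [show (⟨cIdx n t, cIdx_lt hn t⟩ : Fin n) = ⟨j, hjltn⟩ from Fin.ext (by simp [hci])]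
    · -- l = 1 : middle third of cell j
      apply ContinuousOn.congr
        (f := fun p : (Fin n → X) × unitInterval =>
          sA (H (p.1, 1)) (prI (((j:ℝ) + 3 * (uR n p.2 - (j:ℝ)) - 1) / ((n:ℝ) - 1))))
      · -- continuity of the model
        have hΨ : ContinuousOn (fun p : (Fin n → X) × unitInterval => sA (H (p.1, 1)))
            (B ×ˢ (Set.univ : Set unitInterval)) :=
          hsA.comp (hH.comp (continuous_fst.prodMk continuous_const).continuousOn
            (fun p hp => ⟨hp.1, trivial⟩)) (fun p hp => hH1 p.1 hp.1)
        have harg : Continuous fun p : (Fin n → X) × unitInterval =>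
            prI (((j:ℝ) + 3 * (uR n p.2 - (j:ℝ)) - 1) / ((n:ℝ) - 1)) :=
          continuous_prI.comp (((continuous_const.add
            (continuous_const.mul (hinner.sub continuous_const))).sub
            continuous_const).div_const _)
        exact ((continuous_eval.comp_continuousOn (hΨ.prodMk harg.continuousOn))).mono
          Set.inter_subset_left
      · -- equality on the piece
        rintro ⟨b, t⟩ ⟨hmem, hu1, hu2⟩
        dsimp only
        push_cast at hu1 hu2
        have hb : b ∈ B := hmem.1
        have hj1 : (j:ℝ) ≤ uR n t := by linarith
        have hci : cIdx n t = j := cIdx_eq hjle hj1 (by linarith)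
        have hcr : cR n t = uR n t - (j:ℝ) := by rw [cR, hci]
        by_cases h13 : cR n t ≤ 1/3
        · have he : cR n t = 1/3 := le_antisymm h13 (by rw [hcr]; linarith)
          have hue : uR n t = (j:ℝ) + 1/3 := by rw [hcr] at he; linarith
          rw [Fm, if_pos h13, he]
          rw [show (3:ℝ) * (1/3) = 1 by norm_num, prI_one]
          have hargeq : ((j:ℝ) + 3 * (uR n t - (j:ℝ)) - 1) / ((n:ℝ) - 1)
              = ((j:ℕ):ℝ) / ((n:ℝ) - 1) := by rw [hue]; ring_nf
          rw [hargeq, hsec' b hb j hjltn]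
          rw [show (⟨cIdx n t, cIdx_lt hn t⟩ : Fin n) = ⟨j, hjltn⟩ from Fin.ext (by simp [hci])]
        · rw [Fm, if_neg h13, if_pos (by rw [hcr]; linarith)]
          rw [hcr, hci]
    · -- l = 2 : last third of cell j
      apply ContinuousOn.congr
        (f := fun p : (Fin n → X) × unitInterval =>
          H (p.1, prI (3 * ((j:ℝ) + 1 - uR n p.2))) ⟨j + 1, hjltn'⟩)
      · -- continuity of the model
        have hφ : Continuous fun p : (Fin n → X) × unitInterval =>
            (p.1, prI (3 * ((j:ℝ) + 1 - uR n p.2))) :=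
          continuous_fst.prodMk (continuous_prI.comp
            (continuous_const.mul (continuous_const.sub hinner)))
        exact (((continuous_apply (⟨j + 1, hjltn'⟩ : Fin n)).comp_continuousOn
          (hH.comp hφ.continuousOn (fun p hp => ⟨hp.1, trivial⟩)))).mono
          Set.inter_subset_left
      · -- equality on the piece
        rintro ⟨b, t⟩ ⟨hmem, hu1, hu2⟩
        dsimp only
        push_cast at hu1 hu2
        have hb : b ∈ B := hmem.1
        by_cases hend : uR n t < (j:ℝ) + 1
        · have hj1 : (j:ℝ) ≤ uR n t := by linarith
          have hci : cIdx n t = j := cIdx_eq hjle hj1 hend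
          have hcr : cR n t = uR n t - (j:ℝ) := by rw [cR, hci]
          by_cases h23 : cR n t ≤ 2/3
          · have he : cR n t = 2/3 := le_antisymm h23 (by rw [hcr]; linarith)
            have hue : uR n t = (j:ℝ) + 2/3 := by rw [hcr] at he; linarith
            rw [Fm, if_neg (by rw [he]; norm_num), if_pos h23]
            have hargeq : ((cIdx n t : ℝ) + 3 * cR n t - 1) / ((n:ℝ) - 1)
                = (((j+1:ℕ)):ℝ) / ((n:ℝ) - 1) := by rw [hci, he]; push_cast; ring_nf
            rw [hargeq, hsec' b hb (j+1) hjltn']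
            rw [show (3:ℝ) * ((j:ℝ) + 1 - uR n t) = 1 by rw [hue]; ring, prI_one]
          · rw [Fm, if_neg (by intro h; apply h23; linarith), if_neg h23]
            rw [show prI (3 * (1 - cR n t)) = prI (3 * ((j:ℝ) + 1 - uR n t)) by rw [hcr]; ring_nf]
            rw [show (⟨cIdx n t + 1, cIdx_succ_lt hn t⟩ : Fin n) = ⟨j + 1, hjltn'⟩ from
              Fin.ext (by simp [hci])]
        · have hue : uR n t = (j:ℝ) + 1 := le_antisymm (by linarith) (not_lt.1 hend)
          have hue' : uR n t = (((j+1:ℕ)):ℝ) := by rw [hue]; push_cast; ring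
          have hfl : ⌊uR n t⌋₊ = j + 1 := by rw [hue']; exact Nat.floor_natCast _
          by_cases hj2 : j + 1 ≤ n - 2
          · have hci : cIdx n t = j + 1 := by rw [cIdx, hfl]; omega
            have hcr : cR n t = 0 := by rw [cR, hci, hue']; ring
            rw [Fm, if_pos (by rw [hcr]; norm_num)]
            rw [hcr]
            rw [show (3:ℝ) * ((j:ℝ) + 1 - uR n t) = 0 by rw [hue]; ring]
            rw [mul_zero]
            rw [show (⟨cIdx n t, cIdx_lt hn t⟩ : Fin n) = ⟨j + 1, hjltn'⟩ from
              Fin.ext (by simp [hci])]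
          · have hj' : j = n - 2 := by omega
            have hci : cIdx n t = j := by rw [cIdx, hfl]; omega
            have hcr : cR n t = 1 := by rw [cR, hci, hue]; ring
            rw [Fm, if_neg (by rw [hcr]; norm_num), if_neg (by rw [hcr]; norm_num)]
            rw [hcr]
            rw [show (3:ℝ) * (1 - (1:ℝ)) = 0 by ring]
            rw [show (3:ℝ) * ((j:ℝ) + 1 - uR n t) = 0 by rw [hue]; ring]
            rw [show (⟨cIdx n t + 1, cIdx_succ_lt hn t⟩ : Fin n) = ⟨j + 1, hjltn'⟩ from
              Fin.ext (by simp [hci])]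

end Main

/-- If `A ⊆ Xⁿ` admits a continuous section of `e_n` and `B ⊆ Xⁿ` deforms into `A`
within `Xⁿ`, then `B` admits a continuous section of `e_n`. -/
theorem stmt4 {X : Type*} [TopologicalSpace X] (n : ℕ) (hn : 2 ≤ n)
    (A B : Set (Fin n → X))
    (sA : (Fin n → X) → C(unitInterval, X)) (hsA : ContinuousOn sA A)
    (hsecA : ∀ a ∈ A, evalMap X n (sA a) = a)
    (H : (Fin n → X) × unitInterval → (Fin n → X))
    (hH : ContinuousOn H (B ×ˢ (Set.univ : Set unitInterval)))
    (hH0 : ∀ b ∈ B, H (b, 0) = b) (hH1 : ∀ b ∈ B, H (b, 1) ∈ A) :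
    ∃ sB : (Fin n → X) → C(unitInterval, X),
      ContinuousOn sB B ∧ ∀ b ∈ B, evalMap X n (sB b) = b := by
  classical
  have hFc := Fm_continuousOn hn sA hsA hsecA H hH hH1
  have hcont_b : ∀ b ∈ B, Continuous fun t => Fm n hn sA H (b, t) := fun b hb =>
    hFc.comp_continuous (continuous_const.prodMk continuous_id) (fun t => ⟨hb, trivial⟩)
  refine ⟨fun b => if hb : b ∈ B then ⟨fun t => Fm n hn sA H (b, t), hcont_b b hb⟩ else sA b,
    ?_, ?_⟩
  · rw [continuousOn_iff_continuous_restrict]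
    have hGc : Continuous fun q : ↥B × unitInterval => Fm n hn sA H (q.1.1, q.2) :=
      hFc.comp_continuous
        ((continuous_subtype_val.comp continuous_fst).prodMk continuous_snd)
        (fun q => ⟨q.1.2, trivial⟩)
    have heq : B.domRestrict (fun b => if hb : b ∈ B then
          (⟨fun t => Fm n hn sA H (b, t), hcont_b b hb⟩ : C(unitInterval, X)) else sA b)
        = fun b : ↥B => (ContinuousMap.curry ⟨_, hGc⟩) b := by
      funext b
      ext t
      simp only [Set.domRestrict_apply, dif_pos b.2, ContinuousMap.curry_apply,
        ContinuousMap.coe_mk]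
    rw [heq]
    exact (ContinuousMap.curry _).continuous
  · intro b hb
    funext i
    simp only [evalMap, dif_pos hb, ContinuousMap.coe_mk]
    exact Fm_node hn sA H b (hH0 b hb) i
end
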